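/- Let Γ = (V, H, s, ι, ρ) be a ribbon graph and L a set of labelable edges such that at every vertex v with val(v) ≥ 2 at least two half-edges incident to v belong to edges not in L. Then the construction Γ∖L = (V, H', s', ι', ρ'), where H' consists of half-edges whose edges are not in L, s' and ι' are restrictions, and ρ'(h) = ρ^i(h) for the smallest positive i with ρ^i(h) ∈ H', is again a well-defined ribbon graph: ι' is a fixed-point-free involution on H', and ρ' is a permutation of H' whose cycles are the fibers of s'. -/
import Mathlib


/-!
Statement 14: deleting the labeled edges from a labeled ribbon graph yields a well-defined
ribbon graph: the involution restricts to the remaining half-edges, and there is a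
permutation ρ' of the remaining half-edges, given on each half-edge by the first positive
ρ-iterate avoiding labeled edges, whose cycles are the fibers of s restricted.
Here `L` is the (ι-closed) set of half-edges lying on labeled edges.
-/

/-- A ribbon graph: vertices `V`, half-edges `H`, incidence `s`, a fixed-point-free
involution `ι` whose orbits are the edges, and a permutation `ρ` whose cycles are
exactly the fibers `H_v = s⁻¹(v)`. -/
structure RibbonGraph (V H : Type*) where
  s : H → V
  ι : H → H
  ι_invol : ∀ h, ι (ι h) = h
  ι_ne : ∀ h, ι h ≠ h
  ρ : Equiv.Perm H
  s_ρ : ∀ h, s (ρ h) = s h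
  ρ_trans : ∀ h h', s h = s h' → ∃ n : ℕ, (⇑ρ)^[n] h = h'

variable {V H : Type*}

/-- The edge containing a half-edge. -/
def RibbonGraph.edgeOf [DecidableEq H] (Γ : RibbonGraph V H) (h : H) : Finset H :=
  {h, Γ.ι h}

/-- The set of edges of a ribbon graph. -/
def RibbonGraph.edges [Fintype H] [DecidableEq H] (Γ : RibbonGraph V H) :
    Finset (Finset H) :=
  Finset.univ.image (fun h => Γ.edgeOf h)

/-- The valency of a vertex: the number of half-edges incident to it. -/
def RibbonGraph.valency [Fintype H] [DecidableEq V] (Γ : RibbonGraph V H) (v : V) : ℕ :=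
  (Finset.univ.filter (fun h => Γ.s h = v)).card

/-- the deletion Γ∖L is again a ribbon graph. -/
theorem deletion_is_ribbonGraph
    (V H : Type*) [Fintype V] [Fintype H] [DecidableEq V] [DecidableEq H]
    (Γ : RibbonGraph V H) (L : Set H)
    (hLsym : ∀ h ∈ L, Γ.ι h ∈ L)
    (hLlab : ∀ h ∈ L, Γ.ι (Γ.ρ h) = Γ.ρ (Γ.ι h))
    (htwo : ∀ v : V, (∃ h h' : H, h ≠ h' ∧ Γ.s h = v ∧ Γ.s h' = v) →
      ∃ h₁ h₂ : H, h₁ ≠ h₂ ∧ Γ.s h₁ = v ∧ Γ.s h₂ = v ∧ h₁ ∉ L ∧ h₂ ∉ L) :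
    (∀ h : H, h ∉ L → Γ.ι h ∉ L) ∧
    ∃ ρ' : H → H,
      (∀ h ∉ L, ρ' h ∉ L ∧ ∃ i : ℕ, 0 < i ∧ ρ' h = (⇑Γ.ρ)^[i] h ∧
        ∀ j : ℕ, 0 < j → j < i → (⇑Γ.ρ)^[j] h ∈ L) ∧
      Set.BijOn ρ' {h | h ∉ L} {h | h ∉ L} ∧
      (∀ h ∉ L, Γ.s (ρ' h) = Γ.s h) ∧
      (∀ h h' : H, h ∉ L → h' ∉ L → Γ.s h = Γ.s h' → ∃ n : ℕ, ρ'^[n] h = h') := by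
  classical
  have hιpart : ∀ h : H, h ∉ L → Γ.ι h ∉ L := by
    intro h hh hι
    exact hh (by simpa [Γ.ι_invol] using hLsym _ hι)
  refine ⟨hιpart, ?_⟩
  have hord : 0 < orderOf Γ.ρ := orderOf_pos Γ.ρ
  have hiter : ∀ h : H, (⇑Γ.ρ)^[orderOf Γ.ρ] h = h := by
    intro h
    rw [Equiv.Perm.iterate_eq_pow, pow_orderOf_eq_one]
    rfl
  have hex : ∀ h : H, h ∉ L → ∃ i, 0 < i ∧ (⇑Γ.ρ)^[i] h ∉ L :=
    fun h hh => ⟨orderOf Γ.ρ, hord, by rw [hiter]; exact hh⟩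
  set ρ' : H → H := fun h =>
    if hh : h ∉ L then (⇑Γ.ρ)^[Nat.find (hex h hh)] h else h with hρ'def
  have hval : ∀ (h : H) (hh : h ∉ L), ρ' h = (⇑Γ.ρ)^[Nat.find (hex h hh)] h := by
    intro h hh; simp [hρ'def, hh]
  have hspec : ∀ (h : H) (hh : h ∉ L),
      0 < Nat.find (hex h hh) ∧ (⇑Γ.ρ)^[Nat.find (hex h hh)] h ∉ L :=
    fun h hh => Nat.find_spec (hex h hh)
  have hmin : ∀ (h : H) (hh : h ∉ L), ∀ j, 0 < j → j < Nat.find (hex h hh) →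
      (⇑Γ.ρ)^[j] h ∈ L := by
    intro h hh j hj hlt
    by_contra hc
    exact Nat.find_min (hex h hh) hlt ⟨hj, hc⟩
  have hs : ∀ (i : ℕ) (h : H), Γ.s ((⇑Γ.ρ)^[i] h) = Γ.s h := by
    intro i
    induction i with
    | zero => intro h; rfl
    | succ n ih =>
      intro h
      rw [Function.iterate_succ_apply', Γ.s_ρ, ih]
  have hmaps : Set.MapsTo ρ' {h | h ∉ L} {h | h ∉ L} := by
    intro h hh
    rw [Set.mem_setOf_eq] at *
    rw [hval h hh]
    exact (hspec h hh).2
  have hinj' : ∀ a (ha : a ∉ L), ∀ b (hb : b ∉ L),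
      Nat.find (hex a ha) ≤ Nat.find (hex b hb) → ρ' a = ρ' b → a = b := by
    intro a ha b hb hle heq
    set i := Nat.find (hex a ha)
    set j := Nat.find (hex b hb)
    rw [hval a ha, hval b hb] at heq
    have hb' : (⇑Γ.ρ)^[i] ((⇑Γ.ρ)^[j - i] b) = (⇑Γ.ρ)^[i] a := by
      rw [← Function.iterate_add_apply, heq, Nat.add_sub_cancel' hle]
    have hab : a = (⇑Γ.ρ)^[j - i] b := ((Γ.ρ.injective.iterate i) hb').symm
    rcases Nat.eq_or_lt_of_le hle with h1 | h1
    · rw [hab]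
      have : j - i = 0 := by omega
      rw [this]; rfl
    · exfalso
      have : (⇑Γ.ρ)^[j - i] b ∈ L := hmin b hb _ (Nat.sub_pos_of_lt h1) (Nat.sub_lt ((hspec a ha).1.trans h1) (hspec a ha).1)
      rw [← hab] at this
      exact ha this
  have hinj : Set.InjOn ρ' {h | h ∉ L} := by
    intro a ha b hb heq
    rw [Set.mem_setOf_eq] at ha hb
    rcases le_total (Nat.find (hex a ha)) (Nat.find (hex b hb)) with hle | hle
    · exact hinj' a ha b hb hle heq
    · exact (hinj' b hb a ha hle heq.symm).symm
  refine ⟨ρ', ?_, ?_, ?_, ?_⟩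
  · intro h hh
    refine ⟨?_, Nat.find (hex h hh), (hspec h hh).1, hval h hh, hmin h hh⟩
    have := hmaps hh
    exact this
  · exact ((Set.Finite.injOn_iff_bijOn_of_mapsTo (Set.toFinite _) hmaps).mp hinj)
  · intro h hh
    rw [hval h hh]
    exact hs _ h
  · intro h h' hh hh' hsv
    obtain ⟨m, hm⟩ := Γ.ρ_trans h h' hsv
    have key : ∀ m : ℕ, ∀ h : H, h ∉ L → (⇑Γ.ρ)^[m] h ∉ L →
        ∃ n : ℕ, ρ'^[n] h = (⇑Γ.ρ)^[m] h := by
      intro m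
      induction m using Nat.strong_induction_on with
      | _ m ih =>
        intro h hh hm'
        rcases Nat.eq_zero_or_pos m with rfl | hmpos
        · exact ⟨0, rfl⟩
        · set i := Nat.find (hex h hh) with hi
          have hile : i ≤ m := Nat.find_le ⟨hmpos, hm'⟩
          have hipos : 0 < i := (hspec h hh).1
          have hρh : ρ' h ∉ L := hmaps hh
          have hrw : (⇑Γ.ρ)^[m - i] (ρ' h) = (⇑Γ.ρ)^[m] h := by
            rw [hval h hh, ← Function.iterate_add_apply]
            congr 1
            omega
          have hm2 : (⇑Γ.ρ)^[m - i] (ρ' h) ∉ L := by rw [hrw]; exact hm'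
          obtain ⟨n, hn⟩ := ih (m - i) (by omega) (ρ' h) hρh hm2
          exact ⟨n + 1, by rw [Function.iterate_succ_apply, hn, hrw]⟩
    obtain ⟨n, hn⟩ := key m h hh (hm ▸ hh')
    exact ⟨n, hn.trans hm⟩
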